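/- Let w be a vector-valued polynomial of the form w(x) = τ(x)·x where τ ∈ P_{k-2}(T; 𝕂) is an antisymmetric-matrix-valued polynomial. If (skw∇w)(x)·x = 0 for all x, then w ≡ 0. -/

import Mathlib

open MvPolynomial

private lemma euler_monomial (d : ℕ) (n : Fin d →₀ ℕ) (a : ℝ) :
    ∑ i : Fin d, X i * pderiv i (monomial n a) = (∑ i : Fin d, n i) • monomial n a := by
  have h : ∀ i : Fin d, X i * pderiv i (monomial n a) = (n i) • monomial n a := by
    intro i
    rw [pderiv_monomial]
    by_cases h0 : n i = 0
    · simp [h0]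
    · rw [X, monomial_mul]
      have : Finsupp.single i 1 + (n - Finsupp.single i 1) = n := by
        ext j
        by_cases hj : j = i
        · subst hj; simp; omega
        · simp [Finsupp.single_apply, hj, Ne.symm hj]
      rw [this]
      simp [mul_comm, smul_monomial]
  simp only [h]
  rw [← Finset.sum_smul]

private lemma euler_coeff (d : ℕ) (m : Fin d →₀ ℕ) (p : MvPolynomial (Fin d) ℝ) :
    coeff m (∑ i : Fin d, X i * pderiv i p) = (∑ i : Fin d, m i : ℕ) * coeff m p := by
  induction p using MvPolynomial.induction_on' with
  | monomial n a =>
    rw [euler_monomial]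
    simp only [coeff_smul, coeff_monomial]
    split_ifs with h
    · subst h; simp [nsmul_eq_mul]
    · simp
  | add p q hp hq =>
    simp only [map_add, mul_add, Finset.sum_add_distrib, coeff_add, hp, hq]

private lemma euler_vanish (d : ℕ) (p : MvPolynomial (Fin d) ℝ)
    (h : p + ∑ i : Fin d, X i * pderiv i p = 0) : p = 0 := by
  ext m
  have h1 := congrArg (coeff m) h
  rw [coeff_add, euler_coeff, coeff_zero] at h1
  have h2 : (1 + (∑ i : Fin d, m i : ℕ) : ℝ) * coeff m p = 0 := by
    linear_combination h1
  have h3 : (1 + (∑ i : Fin d, m i : ℕ) : ℝ) ≠ 0 := by positivity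
  simpa [coeff_zero] using (mul_eq_zero.mp h2).resolve_left h3

/-- Let `w(x) = τ(x)·x` where `τ ∈ P_{k-2}(T; 𝕂)` is an
antisymmetric-matrix-valued polynomial. If `(skw∇w)(x)·x = 0` (as a polynomial
identity), then `w ≡ 0`. Here `(∇w)_{ij} = ∂_i w_j` and `skw A = (A - Aᵀ)/2`,
so that `((skw∇w)x)_j = Σ_i (1/2)(∂_j w_i − ∂_i w_j) x_i`. -/
theorem skw_grad_vanish_of_antisym_times_x (d k : ℕ)
    (τ : Matrix (Fin d) (Fin d) (MvPolynomial (Fin d) ℝ))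
    (hτdeg : ∀ i j, (τ i j).totalDegree ≤ k - 2)
    (hτskw : ∀ i j, τ j i = - τ i j)
    (w : Fin d → MvPolynomial (Fin d) ℝ)
    (hw : ∀ j, w j = ∑ i : Fin d, τ j i * X i)
    (hskw : ∀ j, ∑ i : Fin d, C (1/2 : ℝ) * (pderiv j (w i) - pderiv i (w j)) * X i = 0) :
    ∀ j, w j = 0 := by
  -- Step 1: w·x = 0
  set S : MvPolynomial (Fin d) ℝ := ∑ j : Fin d, w j * X j with hS
  have h1 : S = ∑ j : Fin d, ∑ i : Fin d, τ j i * X i * X j := by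
    simp only [hS, hw, Finset.sum_mul]
  have h1' : S = ∑ i : Fin d, ∑ j : Fin d, τ i j * X i * X j := by
    rw [h1]
    exact Finset.sum_congr rfl fun a _ => Finset.sum_congr rfl fun b _ => by ring
  have h2 : S = -S := by
    nth_rewrite 1 [h1]
    rw [Finset.sum_comm]
    calc ∑ i : Fin d, ∑ j : Fin d, τ j i * X i * X j
        = ∑ i : Fin d, ∑ j : Fin d, -(τ i j * X i * X j) :=
          Finset.sum_congr rfl fun i _ => Finset.sum_congr rfl fun j _ => by
            rw [hτskw i j]; ring
      _ = -∑ i : Fin d, ∑ j : Fin d, τ i j * X i * X j := by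
          simp [Finset.sum_neg_distrib]
      _ = -S := by rw [h1']
  have hS0 : S = 0 := by
    ext m
    have h3 := congrArg (coeff m) h2
    rw [coeff_neg] at h3
    have : coeff m S = 0 := by linarith
    simpa using this
  intro j
  -- Step 2: ∂_j S = Σ_i ∂_j(w i) * X i + w j = 0
  have hdS : ∑ i : Fin d, pderiv j (w i) * X i + w j = 0 := by
    have hz : pderiv j S = 0 := by rw [hS0]; simp
    rw [hS, map_sum] at hz
    have heach : ∀ i : Fin d, pderiv j (w i * X i)
        = pderiv j (w i) * X i + if i = j then w i else 0 := by
      intro i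
      rw [pderiv_mul]
      split_ifs with h
      · subst h; rw [pderiv_X_self, mul_one]
      · rw [pderiv_X_of_ne h, mul_zero, add_zero]
    rw [Finset.sum_congr rfl (fun i _ => heach i), Finset.sum_add_distrib,
        Finset.sum_ite_eq' Finset.univ j w] at hz
    simpa using hz
  -- Step 3: from hskw, Σ_i (∂_j w_i − ∂_i w_j) X_i = 0
  have hsum : ∑ i : Fin d, (pderiv j (w i) - pderiv i (w j)) * X i = 0 := by
    have h := hskw j
    have hfac : ∑ i : Fin d, C (1/2 : ℝ) * ((pderiv j (w i) - pderiv i (w j)) * X i) = 0 := by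
      rw [← h]; exact Finset.sum_congr rfl fun i _ => by ring
    rw [← Finset.mul_sum] at hfac
    rcases mul_eq_zero.mp hfac with h' | h'
    · exfalso
      have := (MvPolynomial.C_eq_zero (σ := Fin d)).mp h'
      norm_num at this
    · exact h'
  -- Combine: w j + Σ_i X_i ∂_i (w j) = 0, then Euler
  have hc : ∑ i : Fin d, pderiv j (w i) * X i - ∑ i : Fin d, pderiv i (w j) * X i = 0 := by
    rw [← Finset.sum_sub_distrib, ← hsum]
    exact Finset.sum_congr rfl fun i _ => by ring
  have key : w j + ∑ i : Fin d, X i * pderiv i (w j) = 0 := by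
    have hx : ∑ i : Fin d, X i * pderiv i (w j) = ∑ i : Fin d, pderiv i (w j) * X i :=
      Finset.sum_congr rfl fun i _ => mul_comm _ _
    rw [hx]
    linear_combination hdS - hc
  exact euler_vanish d (w j) key
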